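/- If a linear order L₀ convexly embeds into a linear order L isomorphic to the rationals (ℚ, ≤), then L₀ is isomorphic to one of: the one-element order, ℚ, 1 + ℚ, ℚ + 1, or 1 + ℚ + 1. -/

import Mathlib

open Set

/-- Congruence for lexicographic sums of orders. -/
def sumLexCongr' {α β γ δ : Type*} [LE α] [LE β] [LE γ] [LE δ]
    (e₁ : α ≃o γ) (e₂ : β ≃o δ) : (α ⊕ₗ β) ≃o (γ ⊕ₗ δ) where
  toFun x := toLex (Sum.map e₁ e₂ (ofLex x))
  invFun y := toLex (Sum.map e₁.symm e₂.symm (ofLex y))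
  left_inv x := by
    have h : ∀ y : α ⊕ β, Sum.map (⇑e₁.symm) (⇑e₂.symm) (Sum.map (⇑e₁) (⇑e₂) y) = y := by
      rintro (a | b) <;> simp
    simp only [ofLex_toLex, h, toLex_ofLex]
  right_inv y := by
    have h : ∀ z : γ ⊕ δ, Sum.map (⇑e₁) (⇑e₂) (Sum.map (⇑e₁.symm) (⇑e₂.symm) z) = z := by
      rintro (a | b) <;> simp
    simp only [ofLex_toLex, h, toLex_ofLex]
  map_rel_iff' := by
    intro x y
    obtain ⟨u, rfl⟩ : ∃ u, toLex u = x := ⟨ofLex x, rfl⟩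
    obtain ⟨v, rfl⟩ : ∃ v, toLex v = y := ⟨ofLex y, rfl⟩
    rcases u with a | b <;> rcases v with a' | b' <;>
      simp [Sum.Lex.inl_le_inl_iff, Sum.Lex.inr_le_inr_iff, Sum.Lex.inl_le_inr,
        Sum.Lex.not_inr_le_inl, e₁.map_rel_iff, e₂.map_rel_iff]

/-- A linear order with a bottom element splits as `1 + (rest)`. -/
def botIso {α : Type*} [LinearOrder α] (a : α) (ha : ∀ x, a ≤ x) :
    α ≃o (PUnit ⊕ₗ (Set.Ioi a)) where
  toFun x := if h : a < x then toLex (Sum.inr ⟨x, h⟩) else toLex (Sum.inl PUnit.unit)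
  invFun y := Sum.elim (fun _ => a) Subtype.val (ofLex y)
  left_inv x := by
    by_cases h : a < x
    · simp [h]
    · simp [h, le_antisymm (ha x) (not_lt.mp h)]
  right_inv y := by
    obtain ⟨v, rfl⟩ : ∃ v, toLex v = y := ⟨ofLex y, rfl⟩
    rcases v with u | ⟨x, hx⟩
    · cases u
      simp [ofLex_toLex, lt_irrefl]
    · have hx' : a < x := hx
      simp only [ofLex_toLex, Sum.elim_inr]
      exact dif_pos hx'
  map_rel_iff' := by
    intro x y
    simp only [Equiv.coe_fn_mk]
    by_cases hx : a < x <;> by_cases hy : a < y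
    · rw [dif_pos hx, dif_pos hy, Sum.Lex.inr_le_inr_iff]; exact Iff.rfl
    · have hy' : y = a := le_antisymm (not_lt.mp hy) (ha y)
      rw [dif_pos hx, dif_neg hy]
      simp [Sum.Lex.not_inr_le_inl, hy', not_le.mpr hx]
    · have hx' : x = a := le_antisymm (not_lt.mp hx) (ha x)
      rw [dif_neg hx, dif_pos hy]
      simp [Sum.Lex.inl_le_inr, hx', ha y]
    · have hx' : x = a := le_antisymm (not_lt.mp hx) (ha x)
      have hy' : y = a := le_antisymm (not_lt.mp hy) (ha y)
      rw [dif_neg hx, dif_neg hy]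
      simp [Sum.Lex.inl_le_inl_iff, hx', hy']

/-- A linear order with a top element splits as `(rest) + 1`. -/
def topIso {α : Type*} [LinearOrder α] (b : α) (hb : ∀ x, x ≤ b) :
    α ≃o ((Set.Iio b) ⊕ₗ PUnit) where
  toFun x := if h : x < b then toLex (Sum.inl ⟨x, h⟩) else toLex (Sum.inr PUnit.unit)
  invFun y := Sum.elim Subtype.val (fun _ => b) (ofLex y)
  left_inv x := by
    by_cases h : x < b
    · simp [h]
    · simp [h, le_antisymm (hb x) (not_lt.mp h)]
  right_inv y := by
    obtain ⟨v, rfl⟩ : ∃ v, toLex v = y := ⟨ofLex y, rfl⟩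
    rcases v with ⟨x, hx⟩ | u
    · have hx' : x < b := hx
      simp only [ofLex_toLex, Sum.elim_inl]
      exact dif_pos hx'
    · cases u
      simp [ofLex_toLex, lt_irrefl]
  map_rel_iff' := by
    intro x y
    simp only [Equiv.coe_fn_mk]
    by_cases hx : x < b <;> by_cases hy : y < b
    · rw [dif_pos hx, dif_pos hy, Sum.Lex.inl_le_inl_iff]; exact Iff.rfl
    · have hy' : y = b := le_antisymm (hb y) (not_lt.mp hy)
      rw [dif_pos hx, dif_neg hy]
      simp [Sum.Lex.inl_le_inr, hy', hb x]
    · have hx' : x = b := le_antisymm (hb x) (not_lt.mp hx)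
      rw [dif_neg hx, dif_pos hy]
      simp [Sum.Lex.not_inr_le_inl, hx', not_le.mpr hy]
    · have hx' : x = b := le_antisymm (hb x) (not_lt.mp hx)
      have hy' : y = b := le_antisymm (hb y) (not_lt.mp hy)
      rw [dif_neg hx, dif_neg hy]
      simp [Sum.Lex.inr_le_inr_iff, hx', hy']

/-- If `L₀` convexly embeds into a linear order isomorphic to `ℚ`, then `L₀` is isomorphic to
one of `1`, `ℚ`, `1 + ℚ`, `ℚ + 1`, `1 + ℚ + 1`. -/
theorem stmt_0 {L₀ L : Type*} [LinearOrder L₀] [LinearOrder L] [Nonempty L₀]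
    (hL : Nonempty (L ≃o ℚ)) (f : L₀ ↪o L) (hf : (Set.range ⇑f).OrdConnected) :
    Nonempty (L₀ ≃o PUnit) ∨ Nonempty (L₀ ≃o ℚ) ∨
      Nonempty (L₀ ≃o (PUnit ⊕ₗ ℚ)) ∨ Nonempty (L₀ ≃o (ℚ ⊕ₗ PUnit)) ∨
      Nonempty (L₀ ≃o (PUnit ⊕ₗ ℚ ⊕ₗ PUnit)) := by
  obtain ⟨e⟩ := hL
  have g : L₀ ↪o ℚ := f.trans e.toOrderEmbedding
  -- L₀ is countable
  haveI : Countable L₀ := Function.Injective.countable g.injective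
  -- L₀ is densely ordered
  haveI : DenselyOrdered L₀ := by
    constructor
    intro x y hxy
    obtain ⟨q, hq1, hq2⟩ := exists_between (e.strictMono (f.strictMono hxy))
    have h1 : f x ≤ e.symm q := by
      rw [← e.symm_apply_apply (f x)]; exact e.symm.monotone hq1.le
    have h2 : e.symm q ≤ f y := by
      rw [← e.symm_apply_apply (f y)]; exact e.symm.monotone hq2.le
    obtain ⟨z, hz⟩ := hf.out (mem_range_self x) (mem_range_self y) ⟨h1, h2⟩
    refine ⟨z, ?_, ?_⟩
    · rw [← f.lt_iff_lt, hz]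
      calc f x = e.symm (e (f x)) := (e.symm_apply_apply _).symm
        _ < e.symm q := e.symm.strictMono hq1
    · rw [← f.lt_iff_lt, hz]
      calc e.symm q < e.symm (e (f y)) := e.symm.strictMono hq2
        _ = f y := e.symm_apply_apply _
  by_cases hsub : Subsingleton L₀
  · left
    exact ⟨{ toFun := fun _ => PUnit.unit
             invFun := fun _ => Classical.arbitrary L₀
             left_inv := fun x => Subsingleton.elim _ _
             right_inv := fun x => Subsingleton.elim _ _
             map_rel_iff' := by
               intro x y
               simp [Subsingleton.elim x y] }⟩
  haveI : Nontrivial L₀ := not_subsingleton_iff_nontrivial.mp hsub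
  by_cases hmin : ∃ a : L₀, ∀ x, a ≤ x
  · obtain ⟨a, ha⟩ := hmin
    by_cases hmax : ∃ b : L₀, ∀ x, x ≤ b
    · -- both min and max: 1 + ℚ + 1
      obtain ⟨b, hb⟩ := hmax
      have hab : a < b := by
        rcases (ha b).lt_or_eq with h | h
        · exact h
        · exact absurd (⟨fun x y =>
            le_antisymm ((hb x).trans (h ▸ ha y)) ((hb y).trans (h ▸ ha x))⟩ :
            Subsingleton L₀) hsub
      haveI : OrdConnected (Set.Ioi a) := Set.ordConnected_Ioi
      -- Ioi a is densely ordered with top element ⟨b, hab⟩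
      have hbtop : ∀ x : Set.Ioi a, x ≤ (⟨b, hab⟩ : Set.Ioi a) := fun x => hb x.1
      -- the middle part
      haveI : Nonempty (Set.Iio (⟨b, hab⟩ : Set.Ioi a)) := by
        obtain ⟨c, hc1, hc2⟩ := exists_between hab
        exact ⟨⟨⟨c, hc1⟩, hc2⟩⟩
      obtain ⟨j⟩ : Nonempty ((Set.Iio (⟨b, hab⟩ : Set.Ioi a)) ≃o ℚ) :=
        Order.iso_of_countable_dense _ _
      refine Or.inr (Or.inr (Or.inr (Or.inr ⟨?_⟩)))
      exact (botIso a ha).trans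
        (sumLexCongr' (OrderIso.refl PUnit)
          ((topIso (⟨b, hab⟩ : Set.Ioi a) hbtop).trans
            (sumLexCongr' j (OrderIso.refl PUnit))))
    · -- min only: 1 + ℚ
      push_neg at hmax
      haveI : NoMaxOrder L₀ := ⟨fun x => by
        obtain ⟨y, hy⟩ := hmax x
        exact ⟨y, hy⟩⟩
      haveI : OrdConnected (Set.Ioi a) := Set.ordConnected_Ioi
      haveI : Nonempty (Set.Ioi a) := by
        obtain ⟨y, hy⟩ := hmax a
        exact ⟨⟨y, hy⟩⟩
      obtain ⟨j⟩ : Nonempty ((Set.Ioi a) ≃o ℚ) := Order.iso_of_countable_dense _ _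
      exact Or.inr (Or.inr (Or.inl ⟨(botIso a ha).trans
        (sumLexCongr' (OrderIso.refl PUnit) j)⟩))
  · by_cases hmax : ∃ b : L₀, ∀ x, x ≤ b
    · -- max only: ℚ + 1
      obtain ⟨b, hb⟩ := hmax
      push_neg at hmin
      haveI : NoMinOrder L₀ := ⟨fun x => by
        obtain ⟨y, hy⟩ := hmin x
        exact ⟨y, hy⟩⟩
      haveI : OrdConnected (Set.Iio b) := Set.ordConnected_Iio
      haveI : Nonempty (Set.Iio b) := by
        obtain ⟨y, hy⟩ := hmin b
        exact ⟨⟨y, hy⟩⟩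
      obtain ⟨j⟩ : Nonempty ((Set.Iio b) ≃o ℚ) := Order.iso_of_countable_dense _ _
      exact Or.inr (Or.inr (Or.inr (Or.inl ⟨(topIso b hb).trans
        (sumLexCongr' j (OrderIso.refl PUnit))⟩)))
    · -- neither: ℚ
      push_neg at hmin; push_neg at hmax
      haveI : NoMinOrder L₀ := ⟨fun x => by
        obtain ⟨y, hy⟩ := hmin x
        exact ⟨y, hy⟩⟩
      haveI : NoMaxOrder L₀ := ⟨fun x => by
        obtain ⟨y, hy⟩ := hmax x
        exact ⟨y, hy⟩⟩
      exact Or.inr (Or.inl (Order.iso_of_countable_dense _ _))
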